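/- arXiv:1801.07952 — 8 statements merged into one kernel-verified Lean document; each statement's English description precedes it below -/
import Mathlib

section
/- If pairs (μ₁, W₁) and (μ₂, W₂) satisfy property (τ) on ℝ^{n₁} and ℝ^{n₂} respectively, then the product pair (μ₁ ⊗ μ₂, W) satisfies property (τ), where W(x₁, x₂) = W₁(x₁) + W₂(x₂). -/
open MeasureTheory
open scoped ENNReal

/-- Exponential `EReal → ℝ≥0∞`, with `e^⊥ = 0` and `e^⊤ = ∞`. -/
noncomputable def expE (x : EReal) : ℝ≥0∞ :=
  if x = ⊥ then 0 else if x = ⊤ then ⊤ else ENNReal.ofReal (Real.exp x.toReal)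

/-- The pair `(μ, W)` satisfies Maurey's property `(τ)`: for every bounded measurable
`f`, `(∫ e^{W □ f} dμ) (∫ e^{-f} dμ) ≤ 1`, where
`(W □ f)(x) = inf_y { f(y) + W(x - y) }`. -/
def PropertyTau {E : Type*} [MeasurableSpace E] [AddGroup E]
    (μ : Measure E) (W : E → EReal) : Prop :=
  ∀ f : E → ℝ, Measurable f → (∃ C : ℝ, ∀ x, |f x| ≤ C) →
    (∫⁻ x, expE (⨅ y, (f y : EReal) + W (x - y)) ∂μ) *
      (∫⁻ x, ENNReal.ofReal (Real.exp (-f x)) ∂μ) ≤ 1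

lemma expE_bot : expE ⊥ = 0 := by simp [expE]

lemma expE_top : expE ⊤ = ⊤ := by simp [expE]

lemma expE_coe (r : ℝ) : expE (r : EReal) = ENNReal.ofReal (Real.exp r) := by
  simp [expE]

lemma expE_eq_top_iff {x : EReal} : expE x = ⊤ ↔ x = ⊤ := by
  induction x using EReal.rec with
  | bot => simp [expE_bot]
  | coe r => simp [expE_coe, ENNReal.ofReal_ne_top]
  | top => simp [expE_top]

lemma expE_mono : Monotone expE := by
  intro a b hab
  induction a using EReal.rec with
  | bot => simp [expE_bot]
  | coe r =>
    induction b using EReal.rec with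
    | bot => exact absurd hab (EReal.bot_lt_coe r).not_ge
    | coe s =>
      rw [expE_coe, expE_coe]
      exact ENNReal.ofReal_le_ofReal (Real.exp_le_exp.mpr (EReal.coe_le_coe_iff.mp hab))
    | top => simp [expE_top]
  | top =>
    rw [top_le_iff.mp hab]

lemma expE_add_le (a b : EReal) : expE (a + b) ≤ expE a * expE b := by
  induction a using EReal.rec with
  | bot => simp [expE_bot]
  | coe r =>
    induction b using EReal.rec with
    | bot => simp [expE_bot]
    | coe s =>
      rw [← EReal.coe_add, expE_coe, expE_coe, expE_coe, Real.exp_add,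
        ENNReal.ofReal_mul (Real.exp_nonneg r)]
    | top =>
      rw [EReal.coe_add_top, expE_top, expE_coe]
      rw [ENNReal.mul_top (by simp [Real.exp_pos r])]
  | top =>
    induction b using EReal.rec with
    | bot => simp [expE_bot]
    | coe s =>
      rw [EReal.top_add_coe, expE_top, expE_coe]
      rw [ENNReal.top_mul (by simp [Real.exp_pos s])]
    | top => simp [expE_top]

lemma expE_coe_add (r : ℝ) (b : EReal) (hb : b ≠ ⊥) :
    expE ((r : EReal) + b) = ENNReal.ofReal (Real.exp r) * expE b := by
  induction b using EReal.rec with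
  | bot => exact absurd rfl hb
  | coe s =>
    rw [← EReal.coe_add, expE_coe, expE_coe, Real.exp_add,
      ENNReal.ofReal_mul (Real.exp_nonneg r)]
  | top =>
    rw [EReal.coe_add_top, expE_top, ENNReal.mul_top (by simp [Real.exp_pos r])]

lemma iInf_expE_le {ι : Sort*} [Nonempty ι] (a : ι → EReal) :
    ⨅ i, expE (a i) ≤ expE (⨅ i, a i) := by
  refine le_of_forall_gt_imp_ge_of_dense fun c hc => ?_
  have ht : (⨅ i, a i) ≠ ⊤ := by
    intro h
    rw [h, expE_top] at hc
    exact (not_top_lt hc)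
  by_cases hctop : c = ⊤
  · simp [hctop]
  · have hc0 : (0 : ℝ≥0∞) < c := (zero_le (a := _)).trans_lt hc
    have hcR : 0 < c.toReal := ENNReal.toReal_pos hc0.ne' hctop
    have htr : (⨅ i, a i) < ((Real.log c.toReal : ℝ) : EReal) := by
      revert hc
      generalize (⨅ i, a i) = t at ht ⊢
      induction t using EReal.rec with
      | bot => exact fun _ => EReal.bot_lt_coe _
      | coe x =>
        intro hc
        rw [expE_coe] at hc
        have hx : Real.exp x < c.toReal :=
          (ENNReal.ofReal_lt_iff_lt_toReal (Real.exp_nonneg x) hctop).mp hc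
        exact EReal.coe_lt_coe_iff.mpr ((Real.lt_log_iff_exp_lt hcR).mpr hx)
      | top => exact absurd rfl ht
    obtain ⟨i, hi⟩ := iInf_lt_iff.mp htr
    calc ⨅ j, expE (a j) ≤ expE (a i) := iInf_le _ i
      _ ≤ expE ((Real.log c.toReal : ℝ) : EReal) := expE_mono hi.le
      _ = ENNReal.ofReal (Real.exp (Real.log c.toReal)) := expE_coe _
      _ = c := by rw [Real.exp_log hcR, ENNReal.ofReal_toReal hctop]

lemma expE_iInf {ι : Sort*} [Nonempty ι] (a : ι → EReal) :
    expE (⨅ i, a i) = ⨅ i, expE (a i) :=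
  le_antisymm (le_iInf fun i => expE_mono (iInf_le a i)) (iInf_expE_le a)

lemma lintegral_prod_le' {α β : Type*} [MeasurableSpace α] [MeasurableSpace β]
    (μ : Measure α) (ν : Measure β) [SFinite ν] (f : α × β → ℝ≥0∞) :
    ∫⁻ z, f z ∂(μ.prod ν) ≤ ∫⁻ x, ∫⁻ y, f (x, y) ∂ν ∂μ := by
  rw [← iSup_lintegral_measurable_le_eq_lintegral f]
  refine iSup_le fun g => iSup_le fun hg => iSup_le fun hgf => ?_
  rw [lintegral_prod g hg.aemeasurable]
  exact lintegral_mono fun x => lintegral_mono fun y => hgf _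


/-- If `(μ₁, W₁)` and `(μ₂, W₂)` satisfy property `(τ)`, then so does the product pair
`(μ₁ ⊗ μ₂, W)` with `W(x₁, x₂) = W₁(x₁) + W₂(x₂)`. -/
theorem stmt_5 (n₁ n₂ : ℕ)
    (μ₁ : Measure (Fin n₁ → ℝ)) [IsProbabilityMeasure μ₁]
    (μ₂ : Measure (Fin n₂ → ℝ)) [IsProbabilityMeasure μ₂]
    (W₁ : (Fin n₁ → ℝ) → EReal) (hW₁ : ∀ x, 0 ≤ W₁ x)
    (W₂ : (Fin n₂ → ℝ) → EReal) (hW₂ : ∀ x, 0 ≤ W₂ x)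
    (h₁ : PropertyTau μ₁ W₁) (h₂ : PropertyTau μ₂ W₂) :
    PropertyTau (μ₁.prod μ₂) (fun p => W₁ p.1 + W₂ p.2) := by
  intro f hf hfb
  obtain ⟨C, hC⟩ := hfb
  -- the measurable function p ↦ e^{-f p} (as ℝ≥0∞)
  have hefm : Measurable fun p : (Fin n₁ → ℝ) × (Fin n₂ → ℝ) =>
      ENNReal.ofReal (Real.exp (-f p)) :=
    ENNReal.measurable_ofReal.comp (Real.measurable_exp.comp hf.neg)
  -- J y₁ = ∫ e^{-f(y₁, ·)} dμ₂
  set J : (Fin n₁ → ℝ) → ℝ≥0∞ :=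
    fun y₁ => ∫⁻ z, ENNReal.ofReal (Real.exp (-f (y₁, z))) ∂μ₂ with hJdef
  have hJmeas : Measurable J := hefm.lintegral_prod_right'
  have hJle : ∀ y₁, J y₁ ≤ ENNReal.ofReal (Real.exp C) := by
    intro y₁
    calc J y₁ ≤ ∫⁻ _, ENNReal.ofReal (Real.exp C) ∂μ₂ := by
          refine lintegral_mono fun z => ENNReal.ofReal_le_ofReal ?_
          have := abs_le.mp (hC (y₁, z))
          exact Real.exp_le_exp.mpr (by linarith)
      _ = ENNReal.ofReal (Real.exp C) := by simp
  have hJge : ∀ y₁, ENNReal.ofReal (Real.exp (-C)) ≤ J y₁ := by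
    intro y₁
    calc ENNReal.ofReal (Real.exp (-C)) = ∫⁻ _, ENNReal.ofReal (Real.exp (-C)) ∂μ₂ := by simp
      _ ≤ J y₁ := by
          refine lintegral_mono fun z => ENNReal.ofReal_le_ofReal ?_
          have := abs_le.mp (hC (y₁, z))
          exact Real.exp_le_exp.mpr (by linarith)
  have hJ0 : ∀ y₁, J y₁ ≠ 0 :=
    fun y₁ => ((ENNReal.ofReal_pos.mpr (Real.exp_pos _)).trans_le (hJge y₁)).ne'
  have hJtop : ∀ y₁, J y₁ ≠ ⊤ :=
    fun y₁ => ((hJle y₁).trans_lt ENNReal.ofReal_lt_top).ne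
  have hJtR : ∀ y₁, 0 < (J y₁).toReal :=
    fun y₁ => ENNReal.toReal_pos (hJ0 y₁) (hJtop y₁)
  -- the function g
  set g : (Fin n₁ → ℝ) → ℝ := fun y₁ => -Real.log (J y₁).toReal with hgdef
  have hgmeas : Measurable g :=
    (Real.measurable_log.comp (ENNReal.measurable_toReal.comp hJmeas)).neg
  have hgbound : ∀ y₁, |g y₁| ≤ C := by
    intro y₁
    rw [abs_le]
    constructor
    · have h1 : (J y₁).toReal ≤ Real.exp C :=
        ENNReal.toReal_le_of_le_ofReal (Real.exp_nonneg C) (hJle y₁)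
      have := (Real.log_le_iff_le_exp (hJtR y₁)).mpr h1
      simp only [hgdef]; linarith
    · have h1 : Real.exp (-C) ≤ (J y₁).toReal :=
        (ENNReal.ofReal_le_iff_le_toReal (hJtop y₁)).mp (hJge y₁)
      have := (Real.le_log_iff_exp_le (hJtR y₁)).mpr h1
      simp only [hgdef]; linarith
  -- e^{g} = J⁻¹, e^{-g} = J
  have hEg : ∀ y₁, ENNReal.ofReal (Real.exp (g y₁)) = (J y₁)⁻¹ := by
    intro y₁
    rw [hgdef]
    simp only [Real.exp_neg, Real.exp_log (hJtR y₁)]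
    rw [ENNReal.ofReal_inv_of_pos (hJtR y₁), ENNReal.ofReal_toReal (hJtop y₁)]
  have hEg' : ∀ y₁, ENNReal.ofReal (Real.exp (-g y₁)) = J y₁ := by
    intro y₁
    rw [hgdef]
    simp only [neg_neg, Real.exp_log (hJtR y₁), ENNReal.ofReal_toReal (hJtop y₁)]
  -- property (τ) for μ₂ applied to the sections of f
  have hI : ∀ y₁, (∫⁻ x₂, expE (⨅ y₂, ((f (y₁, y₂) : ℝ) : EReal) + W₂ (x₂ - y₂)) ∂μ₂)
      ≤ ENNReal.ofReal (Real.exp (g y₁)) := by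
    intro y₁
    have h := h₂ (fun z => f (y₁, z)) (hf.comp measurable_prodMk_left)
      ⟨C, fun z => hC (y₁, z)⟩
    rw [hEg y₁, ENNReal.le_inv_iff_mul_le]
    exact h
  -- the key pointwise estimate
  have key : ∀ x₁ : Fin n₁ → ℝ,
      (∫⁻ x₂, expE (⨅ y : (Fin n₁ → ℝ) × (Fin n₂ → ℝ),
        ((f y : ℝ) : EReal) + (W₁ (x₁ - y.1) + W₂ (x₂ - y.2))) ∂μ₂)
        ≤ expE (⨅ y₁, ((g y₁ : ℝ) : EReal) + W₁ (x₁ - y₁)) := by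
    intro x₁
    refine le_trans (le_iInf fun y₁ => ?_) (iInf_expE_le _)
    have hWb : W₁ (x₁ - y₁) ≠ ⊥ := by
      intro h
      exact absurd (hW₁ (x₁ - y₁)) (by rw [h]; exact EReal.bot_lt_zero.not_ge)
    by_cases hWtop : W₁ (x₁ - y₁) = ⊤
    · have : ((g y₁ : ℝ) : EReal) + W₁ (x₁ - y₁) = ⊤ := by
        rw [hWtop]; exact EReal.coe_add_top _
      rw [this, expE_top]
      exact le_top
    · have hWne : expE (W₁ (x₁ - y₁)) ≠ ⊤ := fun h => hWtop (expE_eq_top_iff.mp h)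
      have step1 : ∀ x₂, expE (⨅ y : (Fin n₁ → ℝ) × (Fin n₂ → ℝ),
          ((f y : ℝ) : EReal) + (W₁ (x₁ - y.1) + W₂ (x₂ - y.2)))
          ≤ expE (W₁ (x₁ - y₁)) *
            expE (⨅ y₂, ((f (y₁, y₂) : ℝ) : EReal) + W₂ (x₂ - y₂)) := by
        intro x₂
        have hrw : expE (W₁ (x₁ - y₁)) *
            expE (⨅ y₂, ((f (y₁, y₂) : ℝ) : EReal) + W₂ (x₂ - y₂))
            = ⨅ y₂, expE (W₁ (x₁ - y₁)) *
                expE (((f (y₁, y₂) : ℝ) : EReal) + W₂ (x₂ - y₂)) := by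
          rw [expE_iInf, ENNReal.mul_iInf (fun h => absurd h hWne)]
        rw [hrw]
        refine le_iInf fun y₂ => ?_
        calc expE (⨅ y : (Fin n₁ → ℝ) × (Fin n₂ → ℝ),
              ((f y : ℝ) : EReal) + (W₁ (x₁ - y.1) + W₂ (x₂ - y.2)))
            ≤ expE (((f (y₁, y₂) : ℝ) : EReal) + (W₁ (x₁ - y₁) + W₂ (x₂ - y₂))) :=
              expE_mono (iInf_le _ (y₁, y₂))
          _ = expE (W₁ (x₁ - y₁) + (((f (y₁, y₂) : ℝ) : EReal) + W₂ (x₂ - y₂))) := by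
              rw [add_left_comm]
          _ ≤ expE (W₁ (x₁ - y₁)) * expE (((f (y₁, y₂) : ℝ) : EReal) + W₂ (x₂ - y₂)) :=
              expE_add_le _ _
      calc (∫⁻ x₂, expE (⨅ y : (Fin n₁ → ℝ) × (Fin n₂ → ℝ),
            ((f y : ℝ) : EReal) + (W₁ (x₁ - y.1) + W₂ (x₂ - y.2))) ∂μ₂)
          ≤ ∫⁻ x₂, expE (W₁ (x₁ - y₁)) *
              expE (⨅ y₂, ((f (y₁, y₂) : ℝ) : EReal) + W₂ (x₂ - y₂)) ∂μ₂ :=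
            lintegral_mono step1
        _ = expE (W₁ (x₁ - y₁)) *
              ∫⁻ x₂, expE (⨅ y₂, ((f (y₁, y₂) : ℝ) : EReal) + W₂ (x₂ - y₂)) ∂μ₂ :=
            lintegral_const_mul' _ _ hWne
        _ ≤ expE (W₁ (x₁ - y₁)) * ENNReal.ofReal (Real.exp (g y₁)) :=
            mul_le_mul_right (hI y₁) _
        _ = expE (((g y₁ : ℝ) : EReal) + W₁ (x₁ - y₁)) := by
            rw [expE_coe_add _ _ hWb, mul_comm]
  -- property (τ) for μ₁ applied to g
  have hτ₁ := h₁ g hgmeas ⟨C, hgbound⟩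
  refine le_trans (mul_le_mul' ?_ (le_of_eq ?_)) hτ₁
  · -- first factor
    refine le_trans (lintegral_prod_le' μ₁ μ₂ _)
      (lintegral_mono fun x₁ => le_trans (le_of_eq ?_) (key x₁))
    simp only [Prod.fst_sub, Prod.snd_sub]
  · -- second factor
    rw [lintegral_prod _ hefm.aemeasurable]
    exact lintegral_congr fun x₁ => (hEg' x₁).symm
end

section
/- If a pair (μ, W) satisfies property (τ), then for every Borel set A ⊆ ℝⁿ and every t > 0, μ(A + B_W(t)) ≥ e^t μ(A) / ((e^t - 1)μ(A) + 1), where B_W(t) = {x : W(x) ≤ t}. -/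
open MeasureTheory
open scoped ENNReal Pointwise

lemma expE_ge {r : ℝ} {z : EReal} (h : (r : EReal) ≤ z) :
    ENNReal.ofReal (Real.exp r) ≤ expE z := by
  unfold expE
  rcases eq_or_ne z ⊥ with hb | hb
  · exact absurd (le_bot_iff.1 (hb ▸ h)) (EReal.coe_ne_bot r)
  rcases eq_or_ne z ⊤ with htop | htop
  · simp [htop]
  · simp only [hb, htop, if_false]
    have hr : r ≤ z.toReal := by
      rw [← EReal.coe_le_coe_iff, EReal.coe_toReal htop hb]; exact h
    exact ENNReal.ofReal_le_ofReal (Real.exp_le_exp.2 hr)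

/-- If `(μ, W)` satisfies property `(τ)`, then for every Borel set `A` and `t > 0`,
`μ(A + B_W(t)) ≥ e^t μ(A) / ((e^t - 1) μ(A) + 1)`, where `B_W(t) = {x : W x ≤ t}`. -/
theorem stmt_6 (n : ℕ) (μ : Measure (Fin n → ℝ)) [IsProbabilityMeasure μ]
    (W : (Fin n → ℝ) → EReal) (hW : ∀ x, 0 ≤ W x)
    (hτ : PropertyTau μ W) :
    ∀ A : Set (Fin n → ℝ), MeasurableSet A → ∀ t : ℝ, 0 < t →
      Real.exp t * (μ A).toReal / ((Real.exp t - 1) * (μ A).toReal + 1)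
        ≤ (μ (A + {x | W x ≤ (t : EReal)})).toReal := by
  intro A hA t ht
  set B : Set (Fin n → ℝ) := {x | W x ≤ (t : EReal)} with hBdef
  set S : Set (Fin n → ℝ) := A + B with hSdef
  set S' : Set (Fin n → ℝ) := toMeasurable μ S with hS'def
  have hS'meas : MeasurableSet S' := measurableSet_toMeasurable μ S
  have hSS' : S ⊆ S' := subset_toMeasurable μ S
  have hμS' : μ S' = μ S := measure_toMeasurable S
  set f : (Fin n → ℝ) → ℝ := Set.indicator Aᶜ (fun _ => t) with hfdef
  have hfmeas : Measurable f := measurable_const.indicator hA.compl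
  have hfnonneg : ∀ y, 0 ≤ f y := fun y => Set.indicator_nonneg (fun _ _ => ht.le) y
  have hfle : ∀ y, f y ≤ t := by
    intro y
    by_cases hy : y ∈ Aᶜ
    · rw [hfdef, Set.indicator_of_mem hy]
    · rw [hfdef, Set.indicator_of_notMem hy]; exact ht.le
  have hfb : ∃ C : ℝ, ∀ x, |f x| ≤ C :=
    ⟨t, fun x => abs_le.2 ⟨by linarith [hfnonneg x], hfle x⟩⟩
  -- pointwise lower bound 1 on the first integrand
  have h1 : ∀ x, (1 : ℝ≥0∞) ≤ expE (⨅ y, (f y : EReal) + W (x - y)) := by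
    intro x
    have h0 : ((0 : ℝ) : EReal) ≤ ⨅ y, (f y : EReal) + W (x - y) := by
      refine le_iInf fun y => ?_
      have h1' : (0 : EReal) ≤ (f y : EReal) := by
        exact_mod_cast hfnonneg y
      calc ((0 : ℝ) : EReal) = (0 : EReal) + 0 := by simp
        _ ≤ (f y : EReal) + W (x - y) := add_le_add h1' (hW _)
    simpa [Real.exp_zero] using expE_ge h0
  -- pointwise lower bound e^t off S'
  have h2 : ∀ x, x ∉ S' → ENNReal.ofReal (Real.exp t)
      ≤ expE (⨅ y, (f y : EReal) + W (x - y)) := by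
    intro x hx
    have hxS : x ∉ S := fun h => hx (hSS' h)
    refine expE_ge (le_iInf fun y => ?_)
    by_cases hy : y ∈ A
    · have hfy : f y = 0 := Set.indicator_of_notMem (by simpa using hy) _
      rw [hfy]
      by_contra hcon
      push_neg at hcon
      have hcon' : W (x - y) < (t : EReal) := by simpa using hcon
      have hwB : x - y ∈ B := hcon'.le
      have hmem : y + (x - y) ∈ S := Set.add_mem_add hy hwB
      rw [show y + (x - y) = x from by abel] at hmem
      exact hxS hmem
    · have hfy : f y = t := Set.indicator_of_mem (by simpa using hy) _
      rw [hfy]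
      exact le_add_of_nonneg_right (hW _)
  -- combined pointwise bound
  have hE1 : (1 : ℝ) < Real.exp t := by
    have := Real.exp_lt_exp.2 ht; simpa using this
  have h4 : ∀ x, Set.indicator S'ᶜ (fun _ => ENNReal.ofReal (Real.exp t - 1)) x + 1
      ≤ expE (⨅ y, (f y : EReal) + W (x - y)) := by
    intro x
    by_cases hx : x ∈ S'ᶜ
    · rw [Set.indicator_of_mem hx]
      have heq : ENNReal.ofReal (Real.exp t - 1) + 1 = ENNReal.ofReal (Real.exp t) := by
        rw [← ENNReal.ofReal_one, ← ENNReal.ofReal_add (by linarith) zero_le_one]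
        norm_num
      rw [heq]
      exact h2 x hx
    · rw [Set.indicator_of_notMem hx, zero_add]
      exact h1 x
  -- first integral lower bound
  have hI1 : ENNReal.ofReal (Real.exp t - 1) * μ S'ᶜ + 1
      ≤ ∫⁻ x, expE (⨅ y, (f y : EReal) + W (x - y)) ∂μ := by
    have hcalc : (∫⁻ x, (Set.indicator S'ᶜ (fun _ => ENNReal.ofReal (Real.exp t - 1)) x + 1) ∂μ)
        = ENNReal.ofReal (Real.exp t - 1) * μ S'ᶜ + 1 := by
      rw [lintegral_add_right _ measurable_const, lintegral_one, measure_univ,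
        lintegral_indicator_const hS'meas.compl]
    rw [← hcalc]
    exact lintegral_mono h4
  -- second integral computation
  set c : ℝ≥0∞ := ENNReal.ofReal (Real.exp (-t)) with hcdef
  have hcle1 : c ≤ 1 := ENNReal.ofReal_le_one.2 (Real.exp_le_one_iff.2 (by linarith))
  have h3 : ∀ x, ENNReal.ofReal (Real.exp (-f x))
      = Set.indicator A (fun _ => (1 : ℝ≥0∞) - c) x + c := by
    intro x
    by_cases hx : x ∈ A
    · have hfx : f x = 0 := Set.indicator_of_notMem (by simpa using hx) _
      rw [Set.indicator_of_mem hx, hfx, tsub_add_cancel_of_le hcle1]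
      simp
    · have hfx : f x = t := Set.indicator_of_mem (by simpa using hx) _
      rw [Set.indicator_of_notMem hx, hfx, zero_add]
  have hI2 : (∫⁻ x, ENNReal.ofReal (Real.exp (-f x)) ∂μ) = ((1 : ℝ≥0∞) - c) * μ A + c := by
    rw [lintegral_congr h3, lintegral_add_right _ measurable_const, lintegral_const,
      measure_univ, mul_one, lintegral_indicator_const hA]
  -- apply property (τ)
  have hτ' := hτ f hfmeas hfb
  rw [hI2] at hτ'
  have hmain : (ENNReal.ofReal (Real.exp t - 1) * μ S'ᶜ + 1) * (((1 : ℝ≥0∞) - c) * μ A + c)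
      ≤ 1 := le_trans (mul_le_mul_left hI1 _) hτ'
  -- convert to reals
  have hμA1 : μ A ≤ 1 := prob_le_one
  have hμS1 : μ S ≤ 1 := by
    rw [← measure_univ (μ := μ)]; exact measure_mono (Set.subset_univ S)
  have hμAne : μ A ≠ ⊤ := (lt_of_le_of_lt hμA1 ENNReal.one_lt_top).ne
  have hμScompl : μ S'ᶜ = 1 - μ S := by
    rw [prob_compl_eq_one_sub hS'meas, hμS']
  rw [hμScompl] at hmain
  set a : ℝ := (μ A).toReal with hadef
  set b : ℝ := (μ S).toReal with hbdef
  have ha0 : 0 ≤ a := ENNReal.toReal_nonneg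
  have ha1 : a ≤ 1 := by
    rw [hadef, ← ENNReal.toReal_one]; exact ENNReal.toReal_mono ENNReal.one_ne_top hμA1
  have hb0 : 0 ≤ b := ENNReal.toReal_nonneg
  have hb1 : b ≤ 1 := by
    rw [hbdef, ← ENNReal.toReal_one]
    exact ENNReal.toReal_mono ENNReal.one_ne_top hμS1
  -- compute toReal of both factors
  have hfin1 : ENNReal.ofReal (Real.exp t - 1) * ((1 : ℝ≥0∞) - μ S) ≠ ⊤ :=
    ENNReal.mul_ne_top ENNReal.ofReal_ne_top
      (lt_of_le_of_lt tsub_le_self ENNReal.one_lt_top).ne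
  have hfin2 : ((1 : ℝ≥0∞) - c) * μ A ≠ ⊤ :=
    ENNReal.mul_ne_top (lt_of_le_of_lt tsub_le_self ENNReal.one_lt_top).ne hμAne
  set ec : ℝ := Real.exp (-t) with hecdef
  have hX : (ENNReal.ofReal (Real.exp t - 1) * ((1 : ℝ≥0∞) - μ S) + 1).toReal
      = (Real.exp t - 1) * (1 - b) + 1 := by
    rw [ENNReal.toReal_add hfin1 ENNReal.one_ne_top, ENNReal.toReal_mul,
      ENNReal.toReal_ofReal (by linarith), ENNReal.toReal_sub_of_le hμS1 ENNReal.one_ne_top,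
      ENNReal.toReal_one]
  have hY : (((1 : ℝ≥0∞) - c) * μ A + c).toReal = (1 - ec) * a + ec := by
    rw [ENNReal.toReal_add hfin2 ENNReal.ofReal_ne_top, ENNReal.toReal_mul,
      ENNReal.toReal_sub_of_le hcle1 ENNReal.one_ne_top, ENNReal.toReal_one,
      hcdef, ENNReal.toReal_ofReal (Real.exp_pos _).le]
  have hreal : ((Real.exp t - 1) * (1 - b) + 1) * ((1 - ec) * a + ec) ≤ 1 := by
    have h5 : ((ENNReal.ofReal (Real.exp t - 1) * ((1 : ℝ≥0∞) - μ S) + 1)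
        * (((1 : ℝ≥0∞) - c) * μ A + c)).toReal ≤ (1 : ℝ≥0∞).toReal :=
      ENNReal.toReal_mono ENNReal.one_ne_top hmain
    rwa [ENNReal.toReal_mul, hX, hY, ENNReal.toReal_one] at h5
  -- final algebra
  have hEc : Real.exp t * ec = 1 := by
    rw [hecdef, ← Real.exp_add]; norm_num
  set E : ℝ := Real.exp t with hEdef
  have hD : 0 < (E - 1) * a + 1 := by nlinarith
  rw [div_le_iff₀ hD]
  have heq : ((1 - ec) * a + ec) * E = (E - 1) * a + 1 := by
    linear_combination (1 - a) * hEc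
  have key : ((E - 1) * (1 - b) + 1) * ((E - 1) * a + 1) ≤ E := by
    have h6 := mul_le_mul_of_nonneg_right hreal (Real.exp_pos t).le
    calc ((E - 1) * (1 - b) + 1) * ((E - 1) * a + 1)
        = ((E - 1) * (1 - b) + 1) * (((1 - ec) * a + ec) * E) := by rw [heq]
      _ = (((E - 1) * (1 - b) + 1) * ((1 - ec) * a + ec)) * E := by ring
      _ ≤ 1 * E := h6
      _ = E := one_mul E
  nlinarith [key, hE1, ha0, hb0, ha1, hb1]
end

section
/- The function φ(x) = √(x² + 1) − 1 − ln((√(x² + 1) + 1)/2) satisfies |φ'(x)| = |x|/(√(x² + 1) + 1) ≤ 1 for all real x, and e^{φ(x)} (1 − φ'(x)²) ≥ 1 for all real x. -/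
/-- The function `φ(x) = √(x² + 1) − 1 − ln((√(x² + 1) + 1)/2)` has derivative
`φ'(x) = x/(√(x² + 1) + 1)`, which satisfies `|φ'(x)| ≤ 1`, and moreover
`e^{φ(x)} (1 − φ'(x)²) ≥ 1` for all real `x`. -/
theorem stmt_10
    (φ : ℝ → ℝ)
    (hφ : ∀ x : ℝ, φ x = Real.sqrt (x ^ 2 + 1) - 1 -
      Real.log ((Real.sqrt (x ^ 2 + 1) + 1) / 2)) :
    ∀ x : ℝ,
      HasDerivAt φ (x / (Real.sqrt (x ^ 2 + 1) + 1)) x ∧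
      |x / (Real.sqrt (x ^ 2 + 1) + 1)| ≤ 1 ∧
      1 ≤ Real.exp (φ x) * (1 - (x / (Real.sqrt (x ^ 2 + 1) + 1)) ^ 2) := by
  intro x
  have hx1 : (0:ℝ) < x ^ 2 + 1 := by positivity
  set s := Real.sqrt (x ^ 2 + 1) with hs
  have hssq : s ^ 2 = x ^ 2 + 1 := Real.sq_sqrt hx1.le
  have hs0 : 0 ≤ s := Real.sqrt_nonneg _
  have hs1 : 1 ≤ s := by nlinarith
  have hd : HasDerivAt φ (x / (s + 1)) x := by
    have h1 : HasDerivAt (fun y : ℝ => y ^ 2 + 1) (2 * x) x := by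
      simpa using (hasDerivAt_pow 2 x).add_const 1
    have h2 : HasDerivAt (fun y : ℝ => Real.sqrt (y ^ 2 + 1)) (2 * x / (2 * s)) x :=
      h1.sqrt (by positivity)
    have h3 : HasDerivAt (fun y : ℝ => (Real.sqrt (y ^ 2 + 1) + 1) / 2)
        (2 * x / (2 * s) / 2) x := (h2.add_const 1).div_const 2
    have h4 : HasDerivAt (fun y : ℝ => Real.log ((Real.sqrt (y ^ 2 + 1) + 1) / 2))
        ((2 * x / (2 * s) / 2) / ((s + 1) / 2)) x := by
      have := h3.log (by positivity)
      simpa using this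
    have h5 := (h2.sub_const 1).sub h4
    have heq : φ = fun y : ℝ => Real.sqrt (y ^ 2 + 1) - 1 -
        Real.log ((Real.sqrt (y ^ 2 + 1) + 1) / 2) := funext hφ
    rw [heq]
    refine h5.congr_deriv ?_
    have hsne : s ≠ 0 := by linarith
    have hsne1 : s + 1 ≠ 0 := by linarith
    field_simp
    ring
  refine ⟨hd, ?_, ?_⟩
  · rw [abs_div, abs_of_pos (by linarith : (0:ℝ) < s + 1), div_le_one (by linarith)]
    nlinarith [sq_abs x, abs_nonneg x]
  · have hu : (0:ℝ) < (s + 1) / 2 := by linarith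
    have hexp : Real.exp (φ x) = Real.exp (s - 1) / ((s + 1) / 2) := by
      rw [hφ x, ← hs, Real.exp_sub, Real.exp_log hu]
    have hone : 1 - (x / (s + 1)) ^ 2 = 2 / (s + 1) := by
      have : (s + 1) ≠ 0 := by linarith
      field_simp
      nlinarith
    rw [hexp, hone]
    have hkey : (s + 1) ^ 2 / 4 ≤ Real.exp (s - 1) := by
      have h := Real.add_one_le_exp ((s - 1) / 2)
      have h2 : (0:ℝ) ≤ (s - 1) / 2 + 1 := by linarith
      have h3 : Real.exp ((s - 1) / 2) ^ 2 = Real.exp (s - 1) := by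
        rw [sq, ← Real.exp_add]; ring_nf
      nlinarith
    rw [div_mul_div_comm, le_div_iff₀ (by positivity)]
    nlinarith
end

section
/- If μ is a symmetric probability measure on ℝ with ∫ x² dμ(x) = 1, then for all 0 ≤ x ≤ 1, the Cramer transform satisfies Λ*_μ(x) ≤ (1/2)[(1 + x)ln(1 + x) + (1 − x)ln(1 − x)]. -/
open MeasureTheory Real Nat
open scoped ENNReal


open MeasureTheory Real
open scoped ENNReal

-- Real inequality: x*y - log (cosh y) ≤ f x
lemma amgm_key (x y : ℝ) (hx0 : 0 ≤ x) (hx1 : x ≤ 1) :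
    x * y - Real.log (Real.cosh y) ≤
      (1 / 2) * ((1 + x) * Real.log (1 + x) + (1 - x) * Real.log (1 - x)) := by
  rcases eq_or_lt_of_le hx1 with rfl | hx1
  · -- x = 1 case
    simp only [sub_self, Real.log_zero, zero_mul, add_zero]
    have h1 : Real.exp y ≤ Real.exp y + Real.exp (-y) :=
      le_add_of_nonneg_right (Real.exp_nonneg _)
    have h2 : y ≤ Real.log (Real.exp y + Real.exp (-y)) := by
      calc y = Real.log (Real.exp y) := (Real.log_exp y).symm
        _ ≤ _ := Real.log_le_log (Real.exp_pos y) h1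
    have h3 : Real.log (Real.exp y + Real.exp (-y)) = Real.log 2 + Real.log (Real.cosh y) := by
      rw [Real.cosh_eq, ← Real.log_mul two_ne_zero (by positivity)]
      ring_nf
    nlinarith [h2, h3]
  · set p : ℝ := (1 + x) / 2 with hp_def
    set q : ℝ := (1 - x) / 2 with hq_def
    have hp : 0 < p := by simp only [hp_def]; linarith
    have hq : 0 < q := by simp only [hq_def]; linarith
    set a : ℝ := Real.exp y / (2 * p) with ha_def
    set b : ℝ := Real.exp (-y) / (2 * q) with hb_def
    have ha : 0 < a := by positivity
    have hb : 0 < b := by positivity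
    have hpq : p + q = 1 := by simp [hp_def, hq_def]; ring
    have hg : a ^ p * b ^ q ≤ p * a + q * b :=
      Real.geom_mean_le_arith_mean2_weighted hp.le hq.le ha.le hb.le hpq
    have hsum : p * a + q * b = Real.cosh y := by
      rw [Real.cosh_eq, ha_def, hb_def]
      field_simp
    have hlog : Real.log (a ^ p * b ^ q) ≤ Real.log (Real.cosh y) :=
      Real.log_le_log (by positivity) (hg.trans_eq hsum)
    have hexpand : Real.log (a ^ p * b ^ q) =
        p * (y - Real.log (2 * p)) + q * (-y - Real.log (2 * q)) := by
      rw [Real.log_mul (by positivity) (by positivity), Real.log_rpow ha, Real.log_rpow hb,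
        ha_def, hb_def, Real.log_div (Real.exp_ne_zero _) (by positivity),
        Real.log_div (Real.exp_ne_zero _) (by positivity), Real.log_exp, Real.log_exp]
    have h2p : 2 * p = 1 + x := by rw [hp_def]; ring
    have h2q : 2 * q = 1 - x := by rw [hq_def]; ring
    rw [hexpand, h2p, h2q] at hlog
    simp only [hp_def, hq_def] at hlog
    linarith

lemma moment_ge_one (μ : Measure ℝ) [IsProbabilityMeasure μ]
    (hmom : ∫ s, s ^ 2 ∂μ = 1) (k : ℕ) :
    (1 : ℝ≥0∞) ≤ ∫⁻ s, ENNReal.ofReal (s ^ (2 * k)) ∂μ := by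
  rcases Nat.eq_zero_or_pos k with rfl | hk
  · simp
  have hint : Integrable (fun s : ℝ => s ^ 2) μ := by
    by_contra h
    rw [integral_undef h] at hmom
    norm_num at hmom
  have hl2 : ∫⁻ s, ENNReal.ofReal (s ^ 2) ∂μ = 1 := by
    rw [← ofReal_integral_eq_lintegral_ofReal hint (ae_of_all _ fun s => sq_nonneg s), hmom]
    simp
  have hnorm : ∀ s : ℝ, (‖s ^ 2‖ₑ : ℝ≥0∞) = ENNReal.ofReal (s ^ 2) := fun s =>
    Real.enorm_eq_ofReal (sq_nonneg s)
  have h1 : eLpNorm (fun s : ℝ => s ^ 2) 1 μ = 1 := by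
    rw [eLpNorm_one_eq_lintegral_enorm]
    simpa only [hnorm] using hl2
  have hle : eLpNorm (fun s : ℝ => s ^ 2) 1 μ ≤ eLpNorm (fun s : ℝ => s ^ 2) (k : ℝ≥0∞) μ :=
    eLpNorm_le_eLpNorm_of_exponent_le (by exact_mod_cast hk) (by fun_prop)
  rw [h1, eLpNorm_eq_lintegral_rpow_enorm_toReal (by exact_mod_cast hk.ne') (by simp)] at hle
  have htoReal : ((k : ℝ≥0∞)).toReal = (k : ℝ) := by simp
  rw [htoReal] at hle
  have hpt : ∀ s : ℝ, ((‖s ^ 2‖ₑ : ℝ≥0∞)) ^ (k : ℝ) = ENNReal.ofReal (s ^ (2 * k)) := by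
    intro s
    rw [hnorm, ENNReal.rpow_natCast, ← ENNReal.ofReal_pow (sq_nonneg s), ← pow_mul]
  simp only [hpt] at hle
  have hk' : (k : ℝ) ≠ 0 := by exact_mod_cast hk.ne'
  have h2 := ENNReal.rpow_le_rpow hle (by positivity : (0:ℝ) ≤ (k:ℝ))
  rwa [ENNReal.one_rpow, ← ENNReal.rpow_mul, one_div, inv_mul_cancel₀ hk', ENNReal.rpow_one] at h2

lemma mgf_ge_cosh (μ : Measure ℝ) [IsProbabilityMeasure μ]
    (hsymm : μ.map (fun s => -s) = μ)
    (hmom : ∫ s, s ^ 2 ∂μ = 1) (y : ℝ) :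
    ENNReal.ofReal (Real.cosh y) ≤ ∫⁻ s, ENNReal.ofReal (Real.exp (y * s)) ∂μ := by
  have hneg : ∫⁻ s, ENNReal.ofReal (Real.exp (y * s)) ∂μ
      = ∫⁻ s, ENNReal.ofReal (Real.exp (-(y * s))) ∂μ := by
    conv_lhs => rw [← hsymm]
    rw [lintegral_map (by fun_prop) measurable_neg]
    simp [mul_neg]
  have hcosh : ∫⁻ s, ENNReal.ofReal (Real.cosh (y * s)) ∂μ
      = ∫⁻ s, ENNReal.ofReal (Real.exp (y * s)) ∂μ := by
    have hpt : ∀ s : ℝ, ENNReal.ofReal (Real.cosh (y * s)) =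
        (ENNReal.ofReal (Real.exp (y * s)) + ENNReal.ofReal (Real.exp (-(y * s)))) * 2⁻¹ := by
      intro s
      rw [Real.cosh_eq, ENNReal.ofReal_div_of_pos (by norm_num),
        ENNReal.ofReal_add (Real.exp_nonneg _) (Real.exp_nonneg _), div_eq_mul_inv]
      norm_num
    simp only [hpt]
    rw [lintegral_mul_const _ (by fun_prop), lintegral_add_left (by fun_prop), ← hneg,
      ← two_mul, mul_comm (2 : ℝ≥0∞), mul_assoc,
      ENNReal.mul_inv_cancel two_ne_zero ENNReal.ofNat_ne_top, mul_one]
  have hfactnn : ∀ k : ℕ, (0:ℝ) < ((2*k)! : ℝ) := fun k => by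
    exact_mod_cast (2*k).factorial_pos
  have hseries : ∀ t : ℝ, ENNReal.ofReal (Real.cosh t)
      = ∑' k, ENNReal.ofReal (t ^ (2*k) / (2*k)!) := by
    intro t
    rw [Real.cosh_eq_tsum]
    exact ENNReal.ofReal_tsum_of_nonneg
      (fun k => div_nonneg ((even_two_mul k).pow_nonneg t) (hfactnn k).le)
      t.hasSum_cosh.summable
  have hcnn : ∀ k : ℕ, (0:ℝ) ≤ y ^ (2*k) / (2*k)! :=
    fun k => div_nonneg ((even_two_mul k).pow_nonneg y) (hfactnn k).le
  calc ENNReal.ofReal (Real.cosh y)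
      = ∑' k, ENNReal.ofReal (y ^ (2*k) / (2*k)!) := hseries y
    _ = ∑' k, ENNReal.ofReal (y ^ (2*k) / (2*k)!) * 1 := by simp
    _ ≤ ∑' k, ENNReal.ofReal (y ^ (2*k) / (2*k)!) * ∫⁻ s, ENNReal.ofReal (s ^ (2*k)) ∂μ :=
        ENNReal.tsum_le_tsum fun k => mul_le_mul_right (moment_ge_one μ hmom k) _
    _ = ∑' k, ∫⁻ s, ENNReal.ofReal ((y*s) ^ (2*k) / (2*k)!) ∂μ := by
        refine tsum_congr fun k => ?_
        rw [← lintegral_const_mul _ (by fun_prop)]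
        refine lintegral_congr fun s => ?_
        rw [← ENNReal.ofReal_mul (hcnn k)]
        congr 1
        rw [mul_pow]
        ring
    _ = ∫⁻ s, ∑' k, ENNReal.ofReal ((y*s) ^ (2*k) / (2*k)!) ∂μ :=
        (lintegral_tsum fun k => (by fun_prop : Measurable _).aemeasurable).symm
    _ = ∫⁻ s, ENNReal.ofReal (Real.cosh (y * s)) ∂μ := by
        refine lintegral_congr fun s => ?_
        rw [← hseries]
    _ = _ := hcosh

/-- If `μ` is a symmetric probability measure on `ℝ` with unit second moment, then for
`0 ≤ x ≤ 1` the Cramer transform satisfies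
`Λ*_μ(x) ≤ (1/2)[(1+x)ln(1+x) + (1−x)ln(1−x)]`. -/
theorem stmt_14 (μ : Measure ℝ) [IsProbabilityMeasure μ]
    (hsymm : μ.map (fun s => -s) = μ)
    (hmom : ∫ s, s ^ 2 ∂μ = 1) :
    ∀ x : ℝ, 0 ≤ x → x ≤ 1 →
      (⨆ y : ℝ, ((x * y : ℝ) : EReal) -
          ENNReal.log (∫⁻ s, ENNReal.ofReal (Real.exp (y * s)) ∂μ))
        ≤ (((1 / 2) * ((1 + x) * Real.log (1 + x) + (1 - x) * Real.log (1 - x)) : ℝ) : EReal) := by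
  intro x hx0 hx1
  refine iSup_le fun y => ?_
  have hB := mgf_ge_cosh μ hsymm hmom y
  have hlog : (Real.log (Real.cosh y) : EReal)
      ≤ ENNReal.log (∫⁻ s, ENNReal.ofReal (Real.exp (y * s)) ∂μ) := by
    rw [← ENNReal.log_ofReal_of_pos (Real.cosh_pos y)]
    exact ENNReal.log_monotone hB
  calc ((x * y : ℝ) : EReal) - ENNReal.log (∫⁻ s, ENNReal.ofReal (Real.exp (y * s)) ∂μ)
      ≤ ((x * y : ℝ) : EReal) - ((Real.log (Real.cosh y) : ℝ) : EReal) :=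
        EReal.sub_le_sub le_rfl hlog
    _ = ((x * y - Real.log (Real.cosh y) : ℝ) : EReal) := by
        rw [← EReal.coe_sub]
    _ ≤ _ := by
        exact_mod_cast amgm_key x y hx0 hx1
end

section
/- Let θ > 0 satisfy Λ*_ν(θ) = ln 2, where Λ*_ν(x) = √(x² + 1) − 1 − ln((√(x² + 1) + 1)/2) is the Cramer transform of the symmetric exponential distribution. Then for all 0 ≤ x ≤ 1, Λ*_ν(θx) ≥ (1/2)[(1 + x)ln(1 + x) + (1 − x)ln(1 − x)]. -/
open Real Set

/-- Derivative of the Cramer transform. -/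
private lemma lam_hasDeriv (x : ℝ) :
    HasDerivAt (fun y : ℝ => Real.sqrt (y ^ 2 + 1) - 1 -
      Real.log ((Real.sqrt (y ^ 2 + 1) + 1) / 2))
      (x / (Real.sqrt (x ^ 2 + 1) + 1)) x := by
  have hspos : 0 < Real.sqrt (x ^ 2 + 1) := Real.sqrt_pos.2 (by positivity)
  set s := Real.sqrt (x ^ 2 + 1) with hs
  have h1 : HasDerivAt (fun y : ℝ => y ^ 2 + 1) (2 * x) x := by
    simpa using (hasDerivAt_pow 2 x).add_const 1
  have h2 : HasDerivAt (fun y : ℝ => Real.sqrt (y ^ 2 + 1)) (2 * x / (2 * s)) x :=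
    h1.sqrt (by positivity)
  have h3 : HasDerivAt (fun y : ℝ => (Real.sqrt (y ^ 2 + 1) + 1) / 2)
      ((2 * x / (2 * s)) / 2) x := (h2.add_const 1).div_const 2
  have h4 : HasDerivAt (fun y : ℝ => Real.log ((Real.sqrt (y ^ 2 + 1) + 1) / 2))
      (((2 * x / (2 * s)) / 2) / ((s + 1) / 2)) x := h3.log (by positivity)
  have h5 := (h2.sub_const 1).sub h4
  refine h5.congr_deriv ?_
  field_simp
  ring

private lemma lam_zero : Real.sqrt ((0:ℝ) ^ 2 + 1) - 1 -
    Real.log ((Real.sqrt ((0:ℝ) ^ 2 + 1) + 1) / 2) = 0 := by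
  norm_num

/-- Part 1: `Λ(θx) ≥ x² Λ(θ)` for `0 ≤ x ≤ 1`, `θ > 0`. -/
private lemma part1 (θ x : ℝ) (hθ : 0 < θ) (hx0 : 0 ≤ x) (hx1 : x ≤ 1) :
    x ^ 2 * (Real.sqrt (θ ^ 2 + 1) - 1 - Real.log ((Real.sqrt (θ ^ 2 + 1) + 1) / 2))
    ≤ Real.sqrt ((θ * x) ^ 2 + 1) - 1 -
      Real.log ((Real.sqrt ((θ * x) ^ 2 + 1) + 1) / 2) := by
  set L : ℝ → ℝ := fun y => Real.sqrt (y ^ 2 + 1) - 1 -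
    Real.log ((Real.sqrt (y ^ 2 + 1) + 1) / 2) with hLdef
  have hL : ∀ y : ℝ, HasDerivAt L (y / (Real.sqrt (y ^ 2 + 1) + 1)) y := lam_hasDeriv
  have hφd : ∀ t : ℝ, HasDerivAt (fun t => L (t * x) - x ^ 2 * L t)
      ((t * x) / (Real.sqrt ((t * x) ^ 2 + 1) + 1) * x
        - x ^ 2 * (t / (Real.sqrt (t ^ 2 + 1) + 1))) t := by
    intro t
    have hinner : HasDerivAt (fun t : ℝ => t * x) x t := hasDerivAt_mul_const x
    exact ((hL (t * x)).comp t hinner).sub ((hL t).const_mul (x ^ 2))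
  have hmono : MonotoneOn (fun t => L (t * x) - x ^ 2 * L t) (Icc 0 θ) := by
    apply monotoneOn_of_deriv_nonneg (convex_Icc 0 θ)
    · have hdiff : Differentiable ℝ (fun t => L (t * x) - x ^ 2 * L t) :=
        fun t => (hφd t).differentiableAt
      exact hdiff.continuous.continuousOn
    · exact fun t _ => (hφd t).differentiableAt.differentiableWithinAt
    · intro t ht
      rw [interior_Icc] at ht
      rw [(hφd t).deriv]
      have ht0 : 0 < t := ht.1
      have hA : 0 ≤ Real.sqrt ((t * x) ^ 2 + 1) := Real.sqrt_nonneg _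
      have hx2 : x ^ 2 ≤ 1 := by nlinarith
      have hAB : Real.sqrt ((t * x) ^ 2 + 1) ≤ Real.sqrt (t ^ 2 + 1) := by
        apply Real.sqrt_le_sqrt
        nlinarith [mul_nonneg (sq_nonneg t) (sub_nonneg.2 hx2)]
      have key : x ^ 2 * t / (Real.sqrt (t ^ 2 + 1) + 1)
          ≤ x ^ 2 * t / (Real.sqrt ((t * x) ^ 2 + 1) + 1) := by
        gcongr
      have e1 : (t * x) / (Real.sqrt ((t * x) ^ 2 + 1) + 1) * x
          = x ^ 2 * t / (Real.sqrt ((t * x) ^ 2 + 1) + 1) := by ring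
      have e2 : x ^ 2 * (t / (Real.sqrt (t ^ 2 + 1) + 1))
          = x ^ 2 * t / (Real.sqrt (t ^ 2 + 1) + 1) := by ring
      rw [e1, e2]
      linarith
  have h0 : (fun t => L (t * x) - x ^ 2 * L t) 0 = 0 := by
    have hL0 : L 0 = 0 := lam_zero
    simp only [zero_mul, hL0, mul_zero, sub_zero]
  have := hmono (Set.mem_Icc.2 ⟨le_refl 0, hθ.le⟩) (Set.mem_Icc.2 ⟨hθ.le, le_refl θ⟩) hθ.le
  rw [h0] at this
  simpa [hLdef] using this

/-- derivative of the entropy-like function. -/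
private lemma hfun_hasDeriv (t : ℝ) (h1 : (1:ℝ) + t ≠ 0) (h2 : (1:ℝ) - t ≠ 0) :
    HasDerivAt (fun y : ℝ => (1/2) * ((1 + y) * Real.log (1 + y)
        + (1 - y) * Real.log (1 - y)))
      ((1/2) * (Real.log (1 + t) - Real.log (1 - t))) t := by
  have hA : HasDerivAt (fun y : ℝ => 1 + y) 1 t := by
    simpa using (hasDerivAt_id t).const_add 1
  have hB : HasDerivAt (fun y : ℝ => 1 - y) (-1) t := by
    simpa using (hasDerivAt_id t).const_sub 1
  have hlogA : HasDerivAt (fun y : ℝ => Real.log (1 + y)) (1 / (1 + t)) t := by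
    simpa using hA.log h1
  have hlogB : HasDerivAt (fun y : ℝ => Real.log (1 - y)) (-1 / (1 - t)) t := by
    simpa using hB.log h2
  have h5 := ((hA.mul hlogA).add (hB.mul hlogB)).const_mul (1/2 : ℝ)
  refine h5.congr_deriv ?_
  field_simp
  ring

/-- convexity of `log((1+u)/(1-u))` on `[0,1)`. -/
private lemma atanh_le (x t : ℝ) (hx0 : 0 ≤ x) (hx1 : x ≤ 1) (ht0 : 0 ≤ t) (ht1 : t < 1) :
    Real.log (1 + t * x) - Real.log (1 - t * x)
      ≤ x * (Real.log (1 + t) - Real.log (1 - t)) := by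
  set a : ℝ → ℝ := fun u => Real.log (1 + u) - Real.log (1 - u) with ha
  have had : ∀ u ∈ Ioo (0:ℝ) 1, HasDerivAt a (2 / (1 - u ^ 2)) u := by
    intro u hu
    have h1 : (1:ℝ) + u ≠ 0 := by nlinarith [hu.1, hu.2]
    have h2 : (1:ℝ) - u ≠ 0 := by nlinarith [hu.2]
    have hA : HasDerivAt (fun y : ℝ => 1 + y) 1 u := by
      simpa using (hasDerivAt_id u).const_add 1
    have hB : HasDerivAt (fun y : ℝ => 1 - y) (-1) u := by
      simpa using (hasDerivAt_id u).const_sub 1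
    have h5 := ((hA.log h1).sub (hB.log h2))
    have h3 : (1:ℝ) - u ^ 2 ≠ 0 := by nlinarith [hu.1, hu.2]
    refine h5.congr_deriv ?_
    field_simp
    ring
  have hconv : ConvexOn ℝ (Ico (0:ℝ) 1) a := by
    apply MonotoneOn.convexOn_of_deriv (convex_Ico 0 1)
    · apply ContinuousOn.sub
      · apply ContinuousOn.log (by fun_prop)
        intro u hu; nlinarith [hu.1, hu.2]
      · apply ContinuousOn.log (by fun_prop)
        intro u hu; nlinarith [hu.2]
    · rw [interior_Ico]
      exact fun u hu => ((had u hu).differentiableAt).differentiableWithinAt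
    · rw [interior_Ico]
      intro u hu v hv huv
      rw [(had u hu).deriv, (had v hv).deriv]
      have h1 : (0:ℝ) < 1 - v ^ 2 := by nlinarith [hv.1, hv.2]
      have h2 : (0:ℝ) < 1 - u ^ 2 := by nlinarith [hu.1, hu.2]
      have : 1 - v ^ 2 ≤ 1 - u ^ 2 := by nlinarith [hu.1]
      gcongr
  have ht : t ∈ Ico (0:ℝ) 1 := ⟨ht0, ht1⟩
  have h0 : (0:ℝ) ∈ Ico (0:ℝ) 1 := ⟨le_refl 0, one_pos⟩
  have := hconv.2 ht h0 hx0 (show (0:ℝ) ≤ 1 - x by linarith)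
    (show x + (1 - x) = 1 by ring)
  simp only [smul_eq_mul, mul_zero, add_zero] at this
  have ha0 : a 0 = 0 := by simp [ha]
  rw [ha0] at this
  have : a (x * t) ≤ x * a t := by linarith
  simpa [ha, mul_comm x t] using this

/-- Part 2: `h(x) ≤ x² log 2` on `[0,1]`. -/
private lemma part2 (x : ℝ) (hx0 : 0 ≤ x) (hx1 : x ≤ 1) :
    (1/2) * ((1 + x) * Real.log (1 + x) + (1 - x) * Real.log (1 - x))
      ≤ x ^ 2 * Real.log 2 := by
  set h : ℝ → ℝ := fun y => (1/2) * ((1 + y) * Real.log (1 + y)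
      + (1 - y) * Real.log (1 - y)) with hhdef
  have hcont : Continuous h := by
    have c1 : Continuous fun y : ℝ => (1 + y) * Real.log (1 + y) :=
      Real.continuous_mul_log.comp (by continuity)
    have c2 : Continuous fun y : ℝ => (1 - y) * Real.log (1 - y) :=
      Real.continuous_mul_log.comp (by continuity)
    exact continuous_const.mul (c1.add c2)
  have hmono : MonotoneOn (fun t => x ^ 2 * h t - h (t * x)) (Icc 0 1) := by
    apply monotoneOn_of_deriv_nonneg (convex_Icc 0 1)
    · exact ((continuous_const.mul hcont).sub (hcont.comp (by continuity))).continuousOn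
    · rw [interior_Icc]
      intro t ht
      have h1 : (1:ℝ) + t ≠ 0 := by nlinarith [ht.1, ht.2]
      have h2 : (1:ℝ) - t ≠ 0 := by nlinarith [ht.2]
      have h1' : (1:ℝ) + t * x ≠ 0 := by nlinarith [ht.1, ht.2, mul_nonneg ht.1.le hx0]
      have h2' : (1:ℝ) - t * x ≠ 0 := by nlinarith [ht.2, mul_le_of_le_one_right ht.1.le hx1]
      have hd := ((hfun_hasDeriv t h1 h2).const_mul (x ^ 2)).sub
        ((hfun_hasDeriv (t * x) h1' h2').comp t (hasDerivAt_mul_const x))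
      exact hd.differentiableAt.differentiableWithinAt
    · rw [interior_Icc]
      intro t ht
      have h1 : (1:ℝ) + t ≠ 0 := by nlinarith [ht.1, ht.2]
      have h2 : (1:ℝ) - t ≠ 0 := by nlinarith [ht.2]
      have htx : t * x ≤ t := mul_le_of_le_one_right ht.1.le hx1
      have h1' : (1:ℝ) + t * x ≠ 0 := by nlinarith [mul_nonneg ht.1.le hx0]
      have h2' : (1:ℝ) - t * x ≠ 0 := by nlinarith [ht.2]
      have hd : HasDerivAt (fun t => x ^ 2 * h t - h (t * x))
          (x ^ 2 * (1 / 2 * (Real.log (1 + t) - Real.log (1 - t)))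
            - 1 / 2 * (Real.log (1 + t * x) - Real.log (1 - t * x)) * x) t :=
        ((hfun_hasDeriv t h1 h2).const_mul (x ^ 2)).sub
          (HasDerivAt.comp (h₂ := h) (h := fun t => t * x) t (hfun_hasDeriv (t * x) h1' h2') (hasDerivAt_mul_const x))
      rw [hd.deriv]
      have key := atanh_le x t hx0 hx1 ht.1.le ht.2
      nlinarith [key, sq_nonneg x, mul_nonneg hx0 hx0]
  have h0 : h 0 = 0 := by simp [hhdef]
  have := hmono (Set.mem_Icc.2 ⟨le_refl 0, zero_le_one⟩)
    (Set.mem_Icc.2 ⟨zero_le_one, le_refl 1⟩) zero_le_one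
  simp only [zero_mul, h0, mul_zero, sub_zero, zero_sub, one_mul] at this
  have h1v : h 1 = Real.log 2 := by
    simp [hhdef, Real.log_zero]
    ring
  rw [h1v] at this
  have hfin : h x ≤ x ^ 2 * Real.log 2 := by linarith
  exact hfin

/-- If `θ > 0` satisfies `Λ*_ν(θ) = ln 2` for the Cramer transform
`Λ*_ν(x) = √(x² + 1) − 1 − ln((√(x² + 1) + 1)/2)` of the symmetric exponential
distribution, then `Λ*_ν(θx) ≥ (1/2)[(1+x)ln(1+x) + (1−x)ln(1−x)]` for `0 ≤ x ≤ 1`. -/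
theorem stmt_16
    (Λ : ℝ → ℝ)
    (hΛ : ∀ x : ℝ, Λ x = Real.sqrt (x ^ 2 + 1) - 1 -
      Real.log ((Real.sqrt (x ^ 2 + 1) + 1) / 2))
    (θ : ℝ) (hθ : 0 < θ) (hθ2 : Λ θ = Real.log 2) :
    ∀ x : ℝ, 0 ≤ x → x ≤ 1 →
      (1 / 2) * ((1 + x) * Real.log (1 + x) + (1 - x) * Real.log (1 - x)) ≤ Λ (θ * x) := by
  intro x hx0 hx1
  have h1 := part1 θ x hθ hx0 hx1
  have h2 := part2 x hx0 hx1
  rw [hΛ θ] at hθ2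
  rw [hΛ (θ * x)]
  rw [hθ2] at h1
  linarith
end

section
/- If g : ℝ → [0, ∞) is even, nonincreasing on [0, ∞), integrable with ∫ g(x) dx = 1 and ∫ x² g(x) dx = 1, then g(0) ≥ 1/(2√3). -/
open MeasureTheory

set_option maxHeartbeats 1000000 in
/-- Hensley-type bound: if `g : ℝ → [0, ∞)` is even, nonincreasing on `[0, ∞)`,
with `∫ g = 1` and `∫ x² g(x) dx = 1`, then `g(0) ≥ 1/(2√3)`. -/
theorem stmt_17 (g : ℝ → ℝ)
    (hnonneg : ∀ x : ℝ, 0 ≤ g x)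
    (heven : ∀ x : ℝ, g (-x) = g x)
    (hanti : AntitoneOn g (Set.Ici (0 : ℝ)))
    (hint : Integrable g)
    (hint2 : Integrable fun x : ℝ => x ^ 2 * g x)
    (hmass : ∫ x, g x = 1)
    (hmom : ∫ x, x ^ 2 * g x = 1) :
    1 / (2 * Real.sqrt 3) ≤ g 0 := by
  set c := g 0 with hc
  -- c > 0
  have hcpos : 0 < c := by
    rcases lt_or_eq_of_le (hnonneg 0) with h | h
    · exact h
    · exfalso
      have hzero : ∀ x, g x = 0 := by
        intro x
        rcases le_or_gt 0 x with hx | hx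
        · have := hanti (Set.mem_Ici.mpr le_rfl) (Set.mem_Ici.mpr hx) hx
          have := hnonneg x
          linarith [this]
        · have h1 : g (-x) ≤ g 0 :=
            hanti (Set.mem_Ici.mpr le_rfl) (Set.mem_Ici.mpr (by linarith)) (by linarith)
          rw [heven x] at h1
          linarith [hnonneg x]
      have : (∫ x, g x) = 0 := by simp [hzero]
      rw [hmass] at this; norm_num at this
  -- g ≤ c everywhere
  have gle : ∀ x, g x ≤ c := by
    intro x
    rcases le_or_gt 0 x with hx | hx
    · exact hanti (Set.mem_Ici.mpr le_rfl) (Set.mem_Ici.mpr hx) hx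
    · have h1 : g (-x) ≤ g 0 :=
        hanti (Set.mem_Ici.mpr le_rfl) (Set.mem_Ici.mpr (by linarith)) (by linarith)
      rw [heven x] at h1; exact h1
  set a := 1 / (2 * c) with ha
  have hapos : 0 < a := by positivity
  set u : ℝ → ℝ := Set.indicator (Set.Icc (-a) a) (fun _ => c) with hu
  -- integrability of u and x^2 * u
  have hu_int : Integrable u := by
    rw [hu, integrable_indicator_iff measurableSet_Icc]
    exact (integrableOn_const_iff (by finiteness)).mpr (Or.inr measure_Icc_lt_top)
  have hx2u_eq : (fun x => x ^ 2 * u x) =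
      Set.indicator (Set.Icc (-a) a) (fun x => x ^ 2 * c) := by
    funext x
    by_cases hx : x ∈ Set.Icc (-a) a
    · simp [hu, Set.indicator_of_mem hx]
    · simp [hu, Set.indicator_of_notMem hx]
  have hx2u_int : Integrable (fun x => x ^ 2 * u x) := by
    rw [hx2u_eq, integrable_indicator_iff measurableSet_Icc]
    exact (Continuous.integrableOn_Icc (by continuity))
  -- integral of u
  have hvol : (volume (Set.Icc (-a) a)).toReal = 2 * a := by
    rw [Real.volume_Icc, ENNReal.toReal_ofReal (by linarith)]
    ring
  have hIu : ∫ x, u x = 1 := by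
    rw [hu, integral_indicator_const _ measurableSet_Icc, measureReal_def, hvol, smul_eq_mul, ha]
    field_simp
  -- integral of x^2 * u
  have hIx2u : ∫ x, x ^ 2 * u x = 2 * a ^ 3 * c / 3 := by
    have heq : ∫ x in Set.Icc (-a) a, x ^ 2 * c = ∫ x in (-a)..a, x ^ 2 * c := by
      rw [intervalIntegral.integral_of_le (by linarith : -a ≤ a),
        integral_Icc_eq_integral_Ioc]
    rw [hx2u_eq, integral_indicator measurableSet_Icc, heq,
      intervalIntegral.integral_mul_const, integral_pow]
    ring
  -- pointwise nonnegativity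
  have key : ∀ x, 0 ≤ (x ^ 2 - a ^ 2) * (g x - u x) := by
    intro x
    by_cases hx : x ∈ Set.Icc (-a) a
    · have hux : u x = c := Set.indicator_of_mem hx _
      have hx2 : x ^ 2 ≤ a ^ 2 := by
        rcases hx with ⟨h1, h2⟩
        nlinarith
      rw [hux]
      nlinarith [gle x]
    · have hux : u x = 0 := Set.indicator_of_notMem hx _
      have hx2 : a ^ 2 ≤ x ^ 2 := by
        simp only [Set.mem_Icc, not_and_or, not_le] at hx
        rcases hx with h | h <;> nlinarith
      rw [hux]
      nlinarith [hnonneg x]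
  have h0 : 0 ≤ ∫ x, (x ^ 2 - a ^ 2) * (g x - u x) := integral_nonneg key
  have hrw : (fun x => (x ^ 2 - a ^ 2) * (g x - u x)) =
      fun x => (x ^ 2 * g x - x ^ 2 * u x) - (a ^ 2 * g x - a ^ 2 * u x) := by
    funext x; ring
  have e1 : ∫ x, ((x ^ 2 * g x - x ^ 2 * u x) - (a ^ 2 * g x - a ^ 2 * u x)) =
      (∫ x, (x ^ 2 * g x - x ^ 2 * u x)) - ∫ x, (a ^ 2 * g x - a ^ 2 * u x) :=
    integral_sub (hint2.sub hx2u_int) ((hint.const_mul _).sub (hu_int.const_mul _))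
  have e2 : ∫ x, (x ^ 2 * g x - x ^ 2 * u x) = 1 - 2 * a ^ 3 * c / 3 := by
    rw [integral_sub hint2 hx2u_int, hmom, hIx2u]
  have e3 : ∫ x, (a ^ 2 * g x - a ^ 2 * u x) = 0 := by
    rw [integral_sub (hint.const_mul _) (hu_int.const_mul _), integral_const_mul,
      integral_const_mul, hmass, hIu]; ring
  rw [hrw, e1, e2, e3] at h0
  -- so 2 a^3 c / 3 ≤ 1, i.e. 1 ≤ 12 c^2
  have h12 : 1 ≤ 12 * c ^ 2 := by
    have haeq : 2 * a ^ 3 * c / 3 = 1 / (12 * c ^ 2) := by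
      rw [ha]; field_simp; ring
    rw [haeq] at h0
    have h1 : 1 / (12 * c ^ 2) ≤ 1 := by linarith
    rwa [div_le_one (by positivity)] at h1
  have hs : Real.sqrt 3 > 0 := Real.sqrt_pos.mpr (by norm_num)
  have hs2 : Real.sqrt 3 ^ 2 = 3 := Real.sq_sqrt (by norm_num)
  rw [div_le_iff₀ (by positivity)]
  nlinarith [sq_nonneg (2 * Real.sqrt 3 * c - 1)]
end

section
/- The Cramer transform of the symmetric exponential distribution satisfies Λ*_ν(x) ≥ (√(1 + |x|) − 1)² for all real x, where Λ*_ν(x) = √(x² + 1) − 1 − ln((√(x² + 1) + 1)/2). -/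
private lemma stmt_18_key (s u : ℝ) (hs : 1 ≤ s) (hu : 1 ≤ u)
    (hc : 4 * s ^ 2 * (s ^ 2 - 1) = (u ^ 2 - 1) ^ 2) :
    2 * s ^ 2 - u ^ 2 + 2 * u - 2 * s - 1 ≥ 0 := by
  nlinarith [sq_nonneg (s - 1), sq_nonneg (u - 1), sq_nonneg (s - u),
    sq_nonneg (s * u - 1), sq_nonneg (u ^ 2 - 1), sq_nonneg (2 * s ^ 2 - u ^ 2),
    mul_nonneg (sub_nonneg.2 hs) (sub_nonneg.2 hu), sq_nonneg (s + u - 2),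
    sq_nonneg (2 * s - u - 1)]


/-- The Cramer transform of the symmetric exponential distribution satisfies
`Λ*_ν(x) = √(x² + 1) − 1 − ln((√(x² + 1) + 1)/2) ≥ (√(1 + |x|) − 1)²`. -/
theorem stmt_18 :
    ∀ x : ℝ,
      (Real.sqrt (1 + |x|) - 1) ^ 2
        ≤ Real.sqrt (x ^ 2 + 1) - 1 - Real.log ((Real.sqrt (x ^ 2 + 1) + 1) / 2) := by
  intro x
  set a : ℝ := |x| with ha_def
  have ha : 0 ≤ a := abs_nonneg x
  have hx2 : x ^ 2 = a ^ 2 := (sq_abs x).symm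
  set t : ℝ := Real.sqrt (x ^ 2 + 1) with ht_def
  set u : ℝ := Real.sqrt (1 + a) with hu_def
  have ht2 : t ^ 2 = x ^ 2 + 1 := Real.sq_sqrt (by positivity)
  have ht0 : 0 ≤ t := Real.sqrt_nonneg _
  have ht1 : 1 ≤ t := by nlinarith [sq_nonneg x]
  have hu2 : u ^ 2 = 1 + a := Real.sq_sqrt (by positivity)
  have hu0 : 0 ≤ u := Real.sqrt_nonneg _
  have hu1 : 1 ≤ u := by nlinarith
  set s : ℝ := Real.sqrt ((t + 1) / 2) with hs_def
  have hs2 : s ^ 2 = (t + 1) / 2 := Real.sq_sqrt (by linarith)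
  have hs0 : 0 ≤ s := Real.sqrt_nonneg _
  have hs1 : 1 ≤ s := by nlinarith
  have hlog : Real.log ((t + 1) / 2) ≤ 2 * (s - 1) := by
    have h1 : (t + 1) / 2 = s ^ 2 := hs2.symm
    rw [h1, Real.log_pow]
    have := Real.log_le_sub_one_of_pos (show (0:ℝ) < s by linarith)
    push_cast
    linarith
  have hc : 4 * s ^ 2 * (s ^ 2 - 1) = (u ^ 2 - 1) ^ 2 := by
    rw [hs2, hu2]
    nlinarith
  have key : 2 * s ^ 2 - u ^ 2 + 2 * u - 2 * s - 1 ≥ 0 :=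
    stmt_18_key s u hs1 hu1 hc
  have ht : t = 2 * s ^ 2 - 1 := by rw [hs2]; ring
  nlinarith [hlog, key]
end

section
/- Let W : ℝ → [0, ∞] and constants a, C₁, C₂ > 0 satisfy: for every t > 0, {x ∈ ℝ : W(x) ≤ a t} ⊆ C₁ t B₁ + C₂ √t B₂, where B₁ = B₂ = [−1, 1]. Then for every n ≥ 1 and every t > 0, {x ∈ ℝⁿ : Σᵢ W(xᵢ) ≤ a t} ⊆ C₁ t B₁ⁿ + C₂ √t B₂ⁿ, where B₁ⁿ, B₂ⁿ are the unit balls of the ℓ¹ and ℓ² norms on ℝⁿ and + is Minkowski sum. -/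
open scoped ENNReal Pointwise BigOperators

lemma zero_of_le_all (C₁ C₂ x : ℝ) (hx : ∀ ε : ℝ, 0 < ε → |x| ≤ C₁ * ε + C₂ * Real.sqrt ε) :
    x = 0 := by
  have hcont : Filter.Tendsto (fun ε : ℝ => C₁ * ε + C₂ * Real.sqrt ε) (nhdsWithin 0 (Set.Ioi 0))
      (nhds 0) := by
    have h : Filter.Tendsto (fun ε : ℝ => C₁ * ε + C₂ * Real.sqrt ε) (nhds 0)
        (nhds (C₁ * 0 + C₂ * Real.sqrt 0)) := by
      exact ((continuous_const.mul continuous_id).add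
        (continuous_const.mul Real.continuous_sqrt)).tendsto 0
    simpa using h.mono_left nhdsWithin_le_nhds
  have hle : |x| ≤ 0 := by
    refine ge_of_tendsto hcont ?_
    filter_upwards [self_mem_nhdsWithin] with ε hε
    exact hx ε hε
  exact abs_nonpos_iff.mp hle

/-- Tensorization of ball inclusions: if for every `t > 0`,
`{x : W x ≤ a t} ⊆ C₁ t B₁ + C₂ √t B₂` in `ℝ`, then for every `n ≥ 1` and `t > 0`,
`{x : Σᵢ W(xᵢ) ≤ a t} ⊆ C₁ t B₁ⁿ + C₂ √t B₂ⁿ` in `ℝⁿ`, where `B₁ⁿ, B₂ⁿ` are the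
`ℓ¹` and `ℓ²` unit balls and `+` is Minkowski sum. -/
theorem stmt_19 (W : ℝ → ℝ≥0∞) (a C₁ C₂ : ℝ)
    (ha : 0 < a) (hC₁ : 0 < C₁) (hC₂ : 0 < C₂)
    (h1 : ∀ t : ℝ, 0 < t →
      {x : ℝ | W x ≤ ENNReal.ofReal (a * t)}
        ⊆ {y : ℝ | |y| ≤ C₁ * t} + {z : ℝ | |z| ≤ C₂ * Real.sqrt t}) :
    ∀ n : ℕ, 1 ≤ n → ∀ t : ℝ, 0 < t →
      {x : Fin n → ℝ | (∑ i, W (x i)) ≤ ENNReal.ofReal (a * t)}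
        ⊆ {y : Fin n → ℝ | (∑ i, |y i|) ≤ C₁ * t}
          + {z : Fin n → ℝ | Real.sqrt (∑ i, (z i) ^ 2) ≤ C₂ * Real.sqrt t} := by
  intro n hn t ht x hx
  simp only [Set.mem_setOf_eq] at hx
  -- each term is finite
  have hfin : ∀ i : Fin n, W (x i) ≠ ⊤ := by
    intro i
    have h1 : W (x i) ≤ ∑ j, W (x j) := Finset.single_le_sum (f := fun j => W (x j)) (fun j _ => zero_le) (Finset.mem_univ i)
    exact ne_top_of_le_ne_top (by exact ENNReal.ofReal_ne_top) (h1.trans hx)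
  set s : Fin n → ℝ := fun i => (W (x i)).toReal / a with hs
  have hs_nonneg : ∀ i, 0 ≤ s i := fun i => div_nonneg ENNReal.toReal_nonneg ha.le
  have hs_sum : ∑ i, s i ≤ t := by
    have hsum : ∑ i, (W (x i)).toReal ≤ a * t := by
      rw [← ENNReal.toReal_sum (fun i _ => hfin i)]
      exact ENNReal.toReal_le_of_le_ofReal (by positivity) hx
    have : ∑ i, s i = (∑ i, (W (x i)).toReal) / a := by
      rw [Finset.sum_div]
    rw [this, div_le_iff₀ ha]
    linarith [hsum]
  -- decompose each coordinate
  have hdec : ∀ i : Fin n, ∃ y z : ℝ, |y| ≤ C₁ * s i ∧ |z| ≤ C₂ * Real.sqrt (s i) ∧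
      y + z = x i := by
    intro i
    rcases lt_or_eq_of_le (hs_nonneg i) with hpos | hzero
    · have hmem : x i ∈ {x : ℝ | W x ≤ ENNReal.ofReal (a * s i)} := by
        simp only [Set.mem_setOf_eq, hs]
        rw [mul_div_cancel₀ _ ha.ne']
        exact le_of_eq (ENNReal.ofReal_toReal (hfin i)).symm
      obtain ⟨y, hy, z, hz, hyz⟩ := h1 (s i) hpos hmem
      exact ⟨y, z, hy, hz, hyz⟩
    · -- s i = 0, so W (x i) = 0, so x i = 0
      have hx0 : x i = 0 := by
        apply zero_of_le_all C₁ C₂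
        intro ε hε
        have hW0 : W (x i) = 0 := by
          have : (W (x i)).toReal = 0 := by
            have := hzero.symm
            simp only [hs] at this
            field_simp at this
            simpa using this
          exact (ENNReal.toReal_eq_zero_iff _).mp this |>.resolve_right (hfin i)
        have hmem : x i ∈ {x : ℝ | W x ≤ ENNReal.ofReal (a * ε)} := by
          simp [hW0]
        obtain ⟨y, hy, z, hz, hyz⟩ := h1 ε hε hmem
        calc |x i| = |y + z| := by rw [show y + z = x i from hyz]
        _ ≤ |y| + |z| := abs_add_le _ _
        _ ≤ C₁ * ε + C₂ * Real.sqrt ε := add_le_add hy hz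
      refine ⟨0, 0, ?_, ?_, by simp [hx0]⟩
      · simp [← hzero]
      · simp [← hzero]
  choose y z hy hz hyz using hdec
  refine Set.mem_add.mpr ⟨y, ?_, z, ?_, ?_⟩
  · simp only [Set.mem_setOf_eq]
    calc ∑ i, |y i| ≤ ∑ i, C₁ * s i := Finset.sum_le_sum (fun i _ => hy i)
    _ = C₁ * ∑ i, s i := by rw [Finset.mul_sum]
    _ ≤ C₁ * t := by nlinarith [hs_sum]
  · simp only [Set.mem_setOf_eq]
    rw [show C₂ * Real.sqrt t = Real.sqrt (C₂ ^ 2 * t) by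
      rw [Real.sqrt_mul (by positivity), Real.sqrt_sq hC₂.le]]
    apply Real.sqrt_le_sqrt
    calc ∑ i, (z i) ^ 2 ≤ ∑ i, C₂ ^ 2 * s i := by
          apply Finset.sum_le_sum
          intro i _
          have h := hz i
          have h2 : (z i) ^ 2 ≤ (C₂ * Real.sqrt (s i)) ^ 2 := by
            rw [← sq_abs]
            exact pow_le_pow_left₀ (abs_nonneg _) h 2
          calc (z i) ^ 2 ≤ (C₂ * Real.sqrt (s i)) ^ 2 := h2
          _ = C₂ ^ 2 * s i := by
            rw [mul_pow, Real.sq_sqrt (hs_nonneg i)]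
    _ = C₂ ^ 2 * ∑ i, s i := by rw [Finset.mul_sum]
    _ ≤ C₂ ^ 2 * t := by nlinarith [hs_sum]
  · funext i
    exact hyz i
end
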